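/- Let $l = 5$ and let $\theta = 5e_{\chi_0} + 5e_{\chi} + e_{\psi} \in \mathbb{Z}_5[S_3]$. Then $(1-s)\cdot\theta = 1-s$ and $(e_{\chi_0} + e_{\chi} + 5e_{\psi})\cdot\theta = 5$, and the sequence $0 \to \mathbb{Z}_5[S_3] \xrightarrow{\cdot\theta} \mathbb{Z}_5[S_3] \to \mathrm{Ind}_{C_3}^{S_3}(\mathbb{Z}/5\mathbb{Z}) \to 0$ is exact, where $C_3 = \langle s \rangle$ acts trivially on $\mathbb{Z}/5\mathbb{Z}$. -/

import Mathlib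

set_option maxRecDepth 8000
set_option linter.unreachableTactic false
set_option linter.unusedTactic false

/- STATEMENT 4: In ℤ₅[S₃], θ = 5e_{χ₀} + 5e_χ + e_ψ satisfies (1-s)θ = 1-s and
(e_{χ₀} + e_χ + 5e_ψ)θ = 5, and 0 → ℤ₅[S₃] →(·θ) ℤ₅[S₃] → Ind_{C₃}^{S₃}(ℤ/5ℤ) → 0
is exact, where C₃ = ⟨s⟩ acts trivially on ℤ/5ℤ.  The induced module of the
trivial C₃-module ℤ/5ℤ is (canonically) the permutation module
(S₃/C₃) →₀ ℤ/5ℤ with S₃ permuting the cosets; exactness is expressed as: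
multiplication by θ is injective and its cokernel is S₃-equivariantly
isomorphic to that induced module. -/

instance : Fact (Nat.Prime 5) := ⟨by norm_num⟩

noncomputable section

abbrev A5 : Type := MonoidAlgebra ℤ_[5] (DihedralGroup 3)

noncomputable def ofG5 : DihedralGroup 3 →* A5 := MonoidAlgebra.of ℤ_[5] (DihedralGroup 3)

noncomputable def s5 : A5 := ofG5 (DihedralGroup.r 1)
noncomputable def r5 : A5 := ofG5 (DihedralGroup.sr 0)

noncomputable def eChi0 : A5 :=
  Ring.inverse (6 : ℤ_[5]) • (1 + s5 + s5 ^ 2 + r5 + r5 * s5 + r5 * s5 ^ 2)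
noncomputable def eChi : A5 :=
  Ring.inverse (6 : ℤ_[5]) • (1 + s5 + s5 ^ 2 - r5 - r5 * s5 - r5 * s5 ^ 2)
noncomputable def ePsi : A5 := Ring.inverse (3 : ℤ_[5]) • (2 - s5 - s5 ^ 2)

noncomputable def theta4 : A5 := 5 * eChi0 + 5 * eChi + ePsi

/-- The subgroup C₃ = ⟨s⟩ of S₃. -/
def C3 : Subgroup (DihedralGroup 3) := Subgroup.zpowers (DihedralGroup.r 1)

/-- The induced module Ind_{C₃}^{S₃}(ℤ/5ℤ) of the trivial C₃-module, realized as
the permutation module on the cosets S₃/C₃. -/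
abbrev IndC3 : Type := (DihedralGroup 3 ⧸ C3) →₀ ZMod 5

/-! ### Auxiliary machinery -/

open DihedralGroup

noncomputable def piH : A5 →+ ((DihedralGroup 3 ⧸ C3) →₀ ℤ_[5]) :=
  (Finsupp.mapDomain.addMonoidHom (QuotientGroup.mk : DihedralGroup 3 → DihedralGroup 3 ⧸ C3)).comp
    MonoidAlgebra.coeffAddEquiv.toAddMonoidHom

noncomputable def phiH : A5 →+ IndC3 :=
  (Finsupp.mapRange.addMonoidHom (PadicInt.toZMod.toAddMonoidHom : ℤ_[5] →+ ZMod 5)).comp piH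

noncomputable def N5 : A5 := 1 + s5 + s5^2

lemma hs5sq : s5^2 = MonoidAlgebra.single (r 2) (1:ℤ_[5]) := by
  rw [s5, ← map_pow, show (r 1 : DihedralGroup 3)^2 = r 2 from by decide]
  rfl

lemma hN5 : N5 = MonoidAlgebra.single (1 : DihedralGroup 3) (1:ℤ_[5])
    + MonoidAlgebra.single (r 1) 1 + MonoidAlgebra.single (r 2) 1 := by
  rw [N5, MonoidAlgebra.one_def, hs5sq, s5]; rfl

lemma single_mul_N5 (g : DihedralGroup 3) (a : ℤ_[5]) :
    MonoidAlgebra.single g a * N5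
      = MonoidAlgebra.single g a + MonoidAlgebra.single (g * r 1) a
        + MonoidAlgebra.single (g * r 2) a := by
  simp only [hN5, mul_add, MonoidAlgebra.single_mul_single, mul_one]

lemma r1_mem : (r 1 : DihedralGroup 3) ∈ C3 := Subgroup.mem_zpowers _
lemma r2_mem : (r 2 : DihedralGroup 3) ∈ C3 := by
  rw [C3, Subgroup.mem_zpowers_iff]
  exact ⟨2, by rw [show (2:ℤ) = ((2:ℕ):ℤ) by norm_num, zpow_natCast]; decide⟩

lemma hmk1 (g : DihedralGroup 3) : (QuotientGroup.mk (g * r 1) : DihedralGroup 3 ⧸ C3)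
    = QuotientGroup.mk g := QuotientGroup.mk_mul_of_mem g r1_mem
lemma hmk2 (g : DihedralGroup 3) : (QuotientGroup.mk (g * r 2) : DihedralGroup 3 ⧸ C3)
    = QuotientGroup.mk g := QuotientGroup.mk_mul_of_mem g r2_mem

lemma piH_single (g : DihedralGroup 3) (a : ℤ_[5]) :
    piH (MonoidAlgebra.single g a) = Finsupp.single (QuotientGroup.mk g) a :=
  Finsupp.mapDomain_single

lemma piH_mul_N5 (x : A5) : piH (x * N5) = (3:ℤ_[5]) • piH x := by
  have key : piH.comp (AddMonoidHom.mulRight N5) = (3:ℤ_[5]) • piH := by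
    refine MonoidAlgebra.addMonoidHom_ext fun g a => ?_
    show piH (MonoidAlgebra.single g a * N5) = (3:ℤ_[5]) • piH (MonoidAlgebra.single g a)
    rw [single_mul_N5, map_add, map_add, piH_single, piH_single, piH_single, hmk1, hmk2,
      Finsupp.smul_single]
    rw [← Finsupp.single_add, ← Finsupp.single_add]
    congr 1
    rw [smul_eq_mul]
    ring
  have := DFunLike.congr_fun key x
  simpa using this

lemma mem_C3 {c : DihedralGroup 3} (hc : c ∈ C3) : c = 1 ∨ c = r 1 ∨ c = r 2 := by
  rw [C3, Subgroup.mem_zpowers_iff] at hc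
  obtain ⟨k, hk⟩ := hc
  have h3 : (r 1 : DihedralGroup 3) ^ (3:ℤ) = 1 := by
    rw [show (3:ℤ) = ((3:ℕ):ℤ) by norm_num, zpow_natCast]; decide
  have hdec : k = 3 * (k / 3) + k % 3 := (Int.mul_ediv_add_emod k 3).symm
  have h0 : (0:ℤ) ≤ k % 3 := Int.emod_nonneg k (by norm_num)
  have h1 : k % 3 < 3 := Int.emod_lt_of_pos k (by norm_num)
  rw [hdec, zpow_add, zpow_mul, h3, one_zpow, one_mul] at hk
  interval_cases h : (k % 3)
  · left; rw [← hk]; rfl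
  · right; left; rw [← hk]; simp
  · right; right; rw [← hk]
    rw [show (2:ℤ) = ((2:ℕ):ℤ) by norm_num, zpow_natCast]; decide

def toA5 (f : DihedralGroup 3 →₀ ℤ_[5]) : A5 := MonoidAlgebra.ofCoeff f

lemma hS3 : s5^3 = 1 := by
  rw [s5, ← map_pow, show (DihedralGroup.r 1 : DihedralGroup 3)^3 = 1 from by decide, map_one]

lemma s5_mul_N5 : s5 * N5 = N5 := by
  have h : s5 * N5 = s5 + s5^2 + s5^3 := by rw [N5]; noncomm_ring
  rw [h, hS3, N5]; abel

lemma s5sq_mul_N5 : s5^2 * N5 = N5 := by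
  rw [pow_two, mul_assoc, s5_mul_N5, s5_mul_N5]

lemma single_c_mul_N5 {c : DihedralGroup 3} (hc : c ∈ C3) :
    MonoidAlgebra.single c (1:ℤ_[5]) * N5 = N5 := by
  rcases mem_C3 hc with h | h | h
  · rw [h, ← MonoidAlgebra.one_def, one_mul]
  · rw [h, show MonoidAlgebra.single (r 1) (1:ℤ_[5]) = s5 from rfl, s5_mul_N5]
  · rw [h, ← hs5sq, s5sq_mul_N5]

lemma hfact (w : A5) : w * N5 = toA5 (Finsupp.mapDomain Quotient.out (piH w)) * N5 := by
  have key : AddMonoidHom.mulRight N5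
      = (AddMonoidHom.mulRight N5).comp
        (MonoidAlgebra.coeffAddEquiv.symm.toAddMonoidHom.comp
          ((Finsupp.mapDomain.addMonoidHom Quotient.out).comp piH)) := by
    refine MonoidAlgebra.addMonoidHom_ext fun g a => ?_
    show MonoidAlgebra.single g a * N5
      = toA5 (Finsupp.mapDomain Quotient.out (piH (MonoidAlgebra.single g a))) * N5
    rw [piH_single, Finsupp.mapDomain_single, toA5]
    obtain ⟨c, hc⟩ := QuotientGroup.mk_out_eq_mul C3 g
    rw [hc]
    show MonoidAlgebra.single g a * N5 = MonoidAlgebra.single (g * (c:DihedralGroup 3)) a * N5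
    have h1 : (MonoidAlgebra.single (g * (c:DihedralGroup 3)) a : A5)
        = MonoidAlgebra.single g a * MonoidAlgebra.single (c:DihedralGroup 3) 1 := by
      rw [MonoidAlgebra.single_mul_single, mul_one]
    rw [h1, mul_assoc, single_c_mul_N5 c.2]
  exact DFunLike.congr_fun key w

lemma smul_cancel {α : Type*} {c : ℤ_[5]} (hc : c ≠ 0) {x y : α →₀ ℤ_[5]}
    (h : c • x = c • y) : x = y := by
  ext a
  have := DFunLike.congr_fun h a
  simp only [Finsupp.smul_apply, smul_eq_mul] at this
  exact mul_left_cancel₀ hc this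

lemma smul_cancelA {c : ℤ_[5]} (hc : c ≠ 0) {x y : A5} (h : c • x = c • y) : x = y :=
  MonoidAlgebra.coeff_injective (smul_cancel hc (congrArg MonoidAlgebra.coeff h))

lemma h6ne : (6:ℤ_[5]) ≠ 0 := by norm_num
lemma h5ne : (5:ℤ_[5]) ≠ 0 := by norm_num

open Classical in
def div5 (a : ℤ_[5]) : ℤ_[5] := if h : (5:ℤ_[5]) ∣ a then h.choose else 0

lemma div5_spec {a : ℤ_[5]} (h : (5:ℤ_[5]) ∣ a) : 5 * div5 a = a := by
  rw [div5]
  rw [dif_pos h]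
  exact h.choose_spec.symm

lemma div5_zero : div5 0 = 0 := by
  rcases mul_eq_zero.mp (div5_spec (dvd_zero (5:ℤ_[5]))) with h5 | h0
  · exact absurd h5 h5ne
  · exact h0

lemma dvd_of_toZMod_eq_zero {a : ℤ_[5]} (h : PadicInt.toZMod a = 0) : (5:ℤ_[5]) ∣ a := by
  have : a ∈ RingHom.ker (PadicInt.toZMod : ℤ_[5] →+* ZMod 5) := h
  rw [PadicInt.ker_toZMod, PadicInt.maximalIdeal_eq_span_p, Ideal.mem_span_singleton] at this
  have h5 : ((5:ℕ):ℤ_[5]) = (5:ℤ_[5]) := by norm_num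
  rwa [h5] at this

lemma piH_smul (c : ℤ_[5]) (x : A5) : piH (c • x) = c • piH x :=
  Finsupp.mapDomain_smul c x.coeff

lemma phiH_single (g : DihedralGroup 3) (a : ℤ_[5]) :
    phiH (MonoidAlgebra.single g a)
      = Finsupp.single (QuotientGroup.mk g) (PadicInt.toZMod a) := by
  rw [phiH, AddMonoidHom.comp_apply, piH_single, Finsupp.mapRange.addMonoidHom_apply]
  exact Finsupp.mapRange_single (hf := map_zero _)

lemma phiH_surj : Function.Surjective phiH := by
  intro f
  refine ⟨toA5 (Finsupp.mapDomain Quotient.out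
    (Finsupp.mapRange (fun b : ZMod 5 => ((b.val : ℕ) : ℤ_[5])) (by simp) f)), ?_⟩
  rw [phiH, AddMonoidHom.comp_apply]
  have h1 : piH (toA5 (Finsupp.mapDomain Quotient.out
      (Finsupp.mapRange (fun b : ZMod 5 => ((b.val : ℕ) : ℤ_[5])) (by simp) f)))
      = Finsupp.mapRange (fun b : ZMod 5 => ((b.val : ℕ) : ℤ_[5])) (by simp) f := by
    show Finsupp.mapDomain (QuotientGroup.mk : DihedralGroup 3 → DihedralGroup 3 ⧸ C3)
      (Finsupp.mapDomain Quotient.out _) = _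
    rw [← Finsupp.mapDomain_comp]
    have : (QuotientGroup.mk ∘ Quotient.out :
        (DihedralGroup 3 ⧸ C3) → (DihedralGroup 3 ⧸ C3)) = id := by
      funext q; exact Quotient.out_eq q
    rw [this, Finsupp.mapDomain_id]
  rw [h1]
  ext q
  simp only [Finsupp.mapRange.addMonoidHom_apply, Finsupp.mapRange_apply,
    RingHom.toAddMonoidHom_eq_coe, AddMonoidHom.coe_coe]
  rw [map_natCast (PadicInt.toZMod : ℤ_[5] →+* ZMod 5)]
  exact ZMod.natCast_rightInverse (f q)

/-! ### Scalar computations -/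

lemma unit3 : IsUnit (3 : ℤ_[5]) := by
  rw [PadicInt.isUnit_iff]
  have h1 : ((3:ℤ) : ℤ_[5]) = (3:ℤ_[5]) := by norm_num
  have h := (PadicInt.norm_int_lt_one_iff_dvd (p := 5) 3)
  rw [h1] at h
  rcases lt_or_eq_of_le (PadicInt.norm_le_one (3 : ℤ_[5])) with h' | h'
  · exact absurd (h.mp h') (by decide)
  · exact h'

lemma unit6 : IsUnit (6 : ℤ_[5]) := by
  have h26 : (6:ℤ_[5]) = 2 * 3 := by norm_num
  rw [h26]
  refine IsUnit.mul ?_ unit3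
  rw [PadicInt.isUnit_iff]
  have h1 : ((2:ℤ) : ℤ_[5]) = (2:ℤ_[5]) := by norm_num
  have h := (PadicInt.norm_int_lt_one_iff_dvd (p := 5) 2)
  rw [h1] at h
  rcases lt_or_eq_of_le (PadicInt.norm_le_one (2 : ℤ_[5])) with h' | h'
  · exact absurd (h.mp h') (by decide)
  · exact h'

lemma h6inv (X : A5) : (6:ℤ_[5]) • (Ring.inverse (6 : ℤ_[5]) • X) = X := by
  rw [smul_smul, Ring.mul_inverse_cancel _ unit6, one_smul]

lemma h6inv3 (X : A5) : (6:ℤ_[5]) • (Ring.inverse (3 : ℤ_[5]) • X) = (2:ℤ_[5]) • X := by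
  rw [smul_smul, show (6:ℤ_[5]) = 2 * 3 by norm_num, mul_assoc,
    Ring.mul_inverse_cancel _ unit3, mul_one]

lemma fin1 {M : Type*} [AddCommGroup M] {a b c x y : M} (h : a + b = c) :
    a + (x + (y + b)) = x + (y + c) := by rw [← h]; abel

lemma ePsi2 : (2:ℤ_[5]) • (2 - s5 - s5^2 : A5) = 4 - 2*s5 - 2*s5^2 := by
  rw [two_smul]
  noncomm_ring; try norm_num [nsmul_eq_mul]; try abel

lemma hXsum : (1 + s5 + s5^2 + r5 + r5*s5 + r5*s5^2) + (1 + s5 + s5^2 - r5 - r5*s5 - r5*s5^2)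
    = 2 + 2*s5 + 2*s5^2 := by
  noncomm_ring; try norm_num [nsmul_eq_mul]; try abel

lemma h6theta : (6:ℤ_[5]) • theta4 = 14 + 8*s5 + 8*s5^2 := by
  rw [theta4, smul_add, smul_add, ← mul_smul_comm, ← mul_smul_comm, eChi0, eChi, ePsi,
    h6inv, h6inv, h6inv3, ePsi2, ← mul_add, hXsum]
  noncomm_ring; try norm_num [nsmul_eq_mul]; exact fin1 (by norm_num)

lemma h6sigma : (6:ℤ_[5]) • (eChi0 + eChi + 5 * ePsi) = 22 - 8*s5 - 8*s5^2 := by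
  rw [smul_add, smul_add, ← mul_smul_comm, eChi0, eChi, ePsi, h6inv, h6inv, h6inv3, ePsi2,
    hXsum]
  noncomm_ring; try norm_num [nsmul_eq_mul]; exact fin1 (by norm_num)

lemma nat_smul (n : ℕ) (w : A5) : ((n:ℤ_[5])) • w = (n : A5) * w := by
  rw [Nat.cast_smul_eq_nsmul, nsmul_eq_mul]

lemma h6theta' : (6:ℤ_[5]) • theta4 = (6:ℤ_[5]) • 1 + (8:ℤ_[5]) • N5 := by
  rw [h6theta, show ((6:ℤ_[5])) = ((6:ℕ):ℤ_[5]) by norm_num,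
    show ((8:ℤ_[5])) = ((8:ℕ):ℤ_[5]) by norm_num, nat_smul, nat_smul, N5]
  push_cast
  noncomm_ring; try norm_num [nsmul_eq_mul]; try abel

/-! ### The three main computations -/

lemma stmt1 : (1 - s5) * theta4 = 1 - s5 := by
  apply smul_cancelA h6ne
  rw [← mul_smul_comm, h6theta]
  have h : (1 - s5) * (14 + 8*s5 + 8*s5^2) = (6 - 6*s5) + (8 - 8*s5^3) := by
    noncomm_ring; try norm_num [nsmul_eq_mul]; try abel
  rw [h, hS3, show ((6:ℤ_[5])) = ((6:ℕ):ℤ_[5]) by norm_num, nat_smul]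
  push_cast
  noncomm_ring; try norm_num [nsmul_eq_mul]; try abel

lemma h36ne : (36:ℤ_[5]) ≠ 0 := by norm_num

lemma smul36 (x y : A5) : (36:ℤ_[5]) • (x * y) = ((6:ℤ_[5]) • x) * ((6:ℤ_[5]) • y) := by
  rw [smul_mul_assoc, mul_smul_comm, smul_smul]
  norm_num

lemma stmt2 : (eChi0 + eChi + 5 * ePsi) * theta4 = 5 := by
  apply smul_cancelA h36ne
  rw [smul36, h6sigma, h6theta]
  have h4 : s5^4 = s5 := by rw [show (4:ℕ) = 3+1 from rfl, pow_succ, hS3, one_mul]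
  have h : (22 - 8*s5 - 8*s5^2) * (14 + 8*s5 + 8*s5^2)
      = 308 + 64*s5 - 128*s5^3 - 64*s5^4 := by
    noncomm_ring; try norm_num [nsmul_eq_mul]; try abel
  rw [h, hS3, h4, show ((36:ℤ_[5])) = ((36:ℕ):ℤ_[5]) by norm_num, nat_smul]
  push_cast
  noncomm_ring; try norm_num [nsmul_eq_mul]; try abel

lemma theta_sigma : theta4 * (eChi0 + eChi + 5 * ePsi) = 5 := by
  apply smul_cancelA h36ne
  rw [smul36, h6sigma, h6theta]
  have h4 : s5^4 = s5 := by rw [show (4:ℕ) = 3+1 from rfl, pow_succ, hS3, one_mul]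
  have h : (14 + 8*s5 + 8*s5^2) * (22 - 8*s5 - 8*s5^2)
      = 308 + 64*s5 - 128*s5^3 - 64*s5^4 := by
    noncomm_ring; try norm_num [nsmul_eq_mul]; try abel
  rw [h, hS3, h4, show ((36:ℤ_[5])) = ((36:ℕ):ℤ_[5]) by norm_num, nat_smul]
  push_cast
  noncomm_ring; try norm_num [nsmul_eq_mul]; try abel

lemma theta_inj : Function.Injective (fun x : A5 => x * theta4) := by
  intro x y hxy
  simp only at hxy
  have h0 : (x - y) * theta4 = 0 := by rw [sub_mul, hxy, sub_self]
  have h1 : (x - y) * (theta4 * (eChi0 + eChi + 5 * ePsi)) = 0 := by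
    rw [← mul_assoc, h0, zero_mul]
  rw [theta_sigma, show ((5:A5)) = ((5:ℕ):A5) by push_cast; ring] at h1
  rw [(Nat.commute_cast (x-y) 5).eq, ← nsmul_eq_mul, ← Nat.cast_smul_eq_nsmul ℤ_[5]] at h1
  have h2 : ((5:ℕ):ℤ_[5]) • (x - y) = ((5:ℕ):ℤ_[5]) • (0:A5) := by rw [h1, smul_zero]
  have := smul_cancelA (by norm_num : ((5:ℕ):ℤ_[5]) ≠ 0) h2
  exact sub_eq_zero.mp this

/-! ### Kernel identification -/

lemma hNN : N5 * N5 = (3:ℤ_[5]) • N5 := by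
  rw [show ((3:ℤ_[5])) = ((3:ℕ):ℤ_[5]) by norm_num, nat_smul]
  have h : N5 * N5 = N5 + (s5 * N5 + s5^2 * N5) := by rw [N5]; noncomm_ring
  rw [h, s5_mul_N5, s5sq_mul_N5]
  push_cast
  noncomm_ring; try norm_num [nsmul_eq_mul]; try abel

lemma piH_theta (x : A5) : piH (x * theta4) = (5:ℤ_[5]) • piH x := by
  apply smul_cancel h6ne
  rw [← piH_smul, ← mul_smul_comm, h6theta', mul_add, mul_smul_comm, mul_smul_comm, mul_one,
    map_add, piH_smul, piH_smul, piH_mul_N5, smul_smul, smul_smul]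
  rw [← add_smul]
  norm_num

lemma phiH_theta (x : A5) : phiH (x * theta4) = 0 := by
  rw [phiH, AddMonoidHom.comp_apply, piH_theta]
  ext q
  simp only [Finsupp.mapRange.addMonoidHom_apply, RingHom.toAddMonoidHom_eq_coe,
    AddMonoidHom.coe_coe, Finsupp.mapRange_apply, Finsupp.smul_apply, smul_eq_mul, map_mul,
    Finsupp.coe_zero, Pi.zero_apply]
  have h5 : (PadicInt.toZMod (5:ℤ_[5]) : ZMod 5) = 0 := by
    rw [show (5:ℤ_[5]) = ((5:ℕ):ℤ_[5]) by norm_num, map_natCast]; decide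
  rw [h5, zero_mul]

lemma exists_preimage {x : A5} (hx : phiH x = 0) : ∃ y : A5, y * theta4 = x := by
  have hdvd : ∀ q, (5:ℤ_[5]) ∣ piH x q := by
    intro q
    apply dvd_of_toZMod_eq_zero
    have := DFunLike.congr_fun hx q
    simpa only [phiH, AddMonoidHom.comp_apply, Finsupp.mapRange.addMonoidHom_apply,
      RingHom.toAddMonoidHom_eq_coe, AddMonoidHom.coe_coe, Finsupp.mapRange_apply,
      Finsupp.coe_zero, Pi.zero_apply] using this
  set z : (DihedralGroup 3 ⧸ C3) →₀ ℤ_[5] := Finsupp.mapRange div5 div5_zero (piH x) with hzdef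
  have hz : piH x = (5:ℤ_[5]) • z := by
    ext q
    rw [hzdef, Finsupp.smul_apply, Finsupp.mapRange_apply, smul_eq_mul, div5_spec (hdvd q)]
  set z1 : A5 := toA5 (Finsupp.mapDomain Quotient.out z) * N5 with hz1def
  have hxN : x * N5 = (5:ℤ_[5]) • z1 := by
    rw [hfact x, hz, Finsupp.mapDomain_smul]
    show ((5:ℤ_[5]) • toA5 (Finsupp.mapDomain Quotient.out z)) * N5 = _
    rw [smul_mul_assoc, hz1def]
  have hz1N : z1 * N5 = (3:ℤ_[5]) • z1 := by
    rw [hz1def, mul_assoc, hNN, mul_smul_comm]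
  set b : ℤ_[5] := (-4) * Ring.inverse (3:ℤ_[5]) with hbdef
  refine ⟨x + b • z1, ?_⟩
  apply smul_cancelA h6ne
  rw [← mul_smul_comm, h6theta', mul_add, mul_smul_comm, mul_smul_comm, mul_one]
  have hyN : (x + b • z1) * N5 = z1 := by
    rw [add_mul, smul_mul_assoc, hxN, hz1N, smul_smul]
    have hb3 : b * 3 = -4 := by
      rw [hbdef, mul_assoc, Ring.inverse_mul_cancel _ unit3, mul_one]
    rw [hb3, ← add_smul]
    norm_num
  rw [hyN, smul_add, smul_smul]
  have h6b : (6:ℤ_[5]) * b = -8 := by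
    rw [hbdef, ← mul_assoc, show (6:ℤ_[5]) * (-4) = (-8) * 3 by norm_num, mul_assoc,
      Ring.mul_inverse_cancel _ unit3, mul_one]
  rw [h6b, add_assoc, ← add_smul]
  norm_num

lemma hker : (AddMonoidHom.mulRight theta4).range = phiH.ker := by
  ext x
  constructor
  · rintro ⟨y, rfl⟩
    exact AddMonoidHom.mem_ker.mpr (phiH_theta y)
  · intro hx
    obtain ⟨y, hy⟩ := exists_preimage (AddMonoidHom.mem_ker.mp hx)
    exact ⟨y, hy⟩

lemma equivar (g : DihedralGroup 3) (x : A5) :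
    phiH (ofG5 g * x) = Finsupp.mapDomain (fun c : DihedralGroup 3 ⧸ C3 => g • c) (phiH x) := by
  have key : phiH.comp (AddMonoidHom.mulLeft (ofG5 g))
      = (Finsupp.mapDomain.addMonoidHom (fun c : DihedralGroup 3 ⧸ C3 => g • c)).comp phiH := by
    refine MonoidAlgebra.addMonoidHom_ext fun h a => ?_
    show phiH (ofG5 g * MonoidAlgebra.single h a)
      = Finsupp.mapDomain (fun c => g • c) (phiH (MonoidAlgebra.single h a))
    have h1 : ofG5 g * MonoidAlgebra.single h a = MonoidAlgebra.single (g * h) a := by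
      rw [ofG5, MonoidAlgebra.of_apply, MonoidAlgebra.single_mul_single, one_mul]
    rw [h1, phiH_single, phiH_single, Finsupp.mapDomain_single]
    rfl
  exact DFunLike.congr_fun key x

theorem stmt4 :
    (1 - s5) * theta4 = 1 - s5 ∧
    (eChi0 + eChi + 5 * ePsi) * theta4 = 5 ∧
    Function.Injective (fun x : A5 => x * theta4) ∧
    ∃ e : (A5 ⧸ (AddMonoidHom.mulRight theta4).range) ≃+ IndC3,
      ∀ (g : DihedralGroup 3) (x : A5),
        e (QuotientAddGroup.mk (ofG5 g * x)) =
          Finsupp.mapDomain (fun c : DihedralGroup 3 ⧸ C3 => g • c)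
            (e (QuotientAddGroup.mk x)) := by
  refine ⟨stmt1, stmt2, theta_inj, ?_⟩
  refine ⟨(QuotientAddGroup.quotientAddEquivOfEq hker).trans
    (QuotientAddGroup.quotientKerEquivOfSurjective phiH phiH_surj), ?_⟩
  intro g x
  have he : ∀ y : A5, ((QuotientAddGroup.quotientAddEquivOfEq hker).trans
      (QuotientAddGroup.quotientKerEquivOfSurjective phiH phiH_surj))
        (QuotientAddGroup.mk y) = phiH y := fun y => rfl
  rw [he, he, equivar]

end
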